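/- (Increasing the number of G-SIBs increases the market failure probability.) Fix ε > 0. Then P(|τ_i − τ_j| < ε for some pair (i,j) with 1 ≤ i, j ≤ K, i ≠ j) < P(|τ_i − τ_j| < ε for some pair (i,j) with 1 ≤ i, j ≤ K+1, i ≠ j); i.e., adding a (K+1)-st G-SIB, with the intensities α_0, α_1, …, α_K and the new bank's intensity α_{K+1} fixed, strictly increases the probability of a market failure. -/

import Mathlib

open MeasureTheory ProbabilityTheory

/-- The cumulative hazard `A(t) = ∫_0^t α(s) ds`. -/
noncomputable def cumHaz (α : ℝ → ℝ) (t : ℝ) : ℝ := ∫ s in (0:ℝ)..t, α s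

/-- The first time `s ≥ 0` at which the cumulative hazard reaches level `z`,
i.e. `inf {s ≥ 0 : A(s) ≥ z}`. -/
noncomputable def hitTime (α : ℝ → ℝ) (z : ℝ) : ℝ :=
  sInf {s : ℝ | 0 ≤ s ∧ z ≤ cumHaz α s}

section aux
variable {α : ℝ → ℝ}

variable {α : ℝ → ℝ}

lemma cumHaz_intInt (hcont : ContinuousOn α (Set.Ici 0)) {a b : ℝ} (ha : 0 ≤ a) (hb : 0 ≤ b) :
    IntervalIntegrable α volume a b := by
  apply ContinuousOn.intervalIntegrable
  apply hcont.mono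
  intro x hx
  rcases le_total a b with h | h
  · rw [Set.uIcc_of_le h] at hx; exact le_trans ha hx.1
  · rw [Set.uIcc_of_ge h] at hx; exact le_trans hb hx.1

lemma cumHaz_mono (hcont : ContinuousOn α (Set.Ici 0)) (hpos : ∀ t, 0 ≤ t → 0 < α t)
    {a b : ℝ} (ha : 0 ≤ a) (hab : a ≤ b) : cumHaz α a ≤ cumHaz α b := by
  have hb : 0 ≤ b := le_trans ha hab
  have h1 : cumHaz α a + ∫ s in a..b, α s = cumHaz α b :=
    intervalIntegral.integral_add_adjacent_intervals (cumHaz_intInt hcont le_rfl ha)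
      (cumHaz_intInt hcont ha hb)
  have h2 : 0 ≤ ∫ s in a..b, α s :=
    intervalIntegral.integral_nonneg hab (fun x hx => (hpos x (le_trans ha hx.1)).le)
  linarith

lemma cumHaz_strictMono (hcont : ContinuousOn α (Set.Ici 0)) (hpos : ∀ t, 0 ≤ t → 0 < α t)
    {a b : ℝ} (ha : 0 ≤ a) (hab : a < b) : cumHaz α a < cumHaz α b := by
  have hb : 0 ≤ b := le_trans ha hab.le
  have h1 : cumHaz α a + ∫ s in a..b, α s = cumHaz α b :=
    intervalIntegral.integral_add_adjacent_intervals (cumHaz_intInt hcont le_rfl ha)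
      (cumHaz_intInt hcont ha hb)
  have h2 : 0 < ∫ s in a..b, α s :=
    intervalIntegral.intervalIntegral_pos_of_pos_on (cumHaz_intInt hcont ha hb)
      (fun x hx => hpos x (le_trans ha hx.1.le)) hab
  linarith

lemma cumHaz_nonneg (hcont : ContinuousOn α (Set.Ici 0)) (hpos : ∀ t, 0 ≤ t → 0 < α t)
    {a : ℝ} (ha : 0 ≤ a) : 0 ≤ cumHaz α a := by
  have : cumHaz α 0 = 0 := intervalIntegral.integral_same
  have := cumHaz_mono hcont hpos le_rfl ha
  linarith

lemma hitSet_nonempty (hAinf : Filter.Tendsto (cumHaz α) Filter.atTop Filter.atTop) (z : ℝ) :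
    {s : ℝ | 0 ≤ s ∧ z ≤ cumHaz α s}.Nonempty := by
  have h := (hAinf.eventually_ge_atTop z).and (Filter.eventually_ge_atTop 0)
  rcases h.exists with ⟨s, h1, h2⟩
  exact ⟨s, h2, h1⟩

lemma hitTime_mono (hAinf : Filter.Tendsto (cumHaz α) Filter.atTop Filter.atTop) :
    Monotone (hitTime α) := by
  intro z z' hz
  exact csInf_le_csInf ⟨0, fun s hs => hs.1⟩ (hitSet_nonempty hAinf z')
    (fun s hs => ⟨hs.1, le_trans hz hs.2⟩)

lemma hitTime_le {b z : ℝ} (hb : 0 ≤ b) (hz : z ≤ cumHaz α b) : hitTime α z ≤ b :=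
  csInf_le ⟨0, fun s hs => hs.1⟩ ⟨hb, hz⟩

lemma le_hitTime (hcont : ContinuousOn α (Set.Ici 0)) (hpos : ∀ t, 0 ≤ t → 0 < α t)
    (hAinf : Filter.Tendsto (cumHaz α) Filter.atTop Filter.atTop)
    {a z : ℝ} (ha : 0 ≤ a) (hz : cumHaz α a < z) : a ≤ hitTime α z := by
  apply le_csInf (hitSet_nonempty hAinf z)
  intro s hs
  by_contra h
  push_neg at h
  exact absurd (le_trans hs.2 (cumHaz_mono hcont hpos hs.1 h.le)) (not_le.mpr hz)

lemma hitTime_nonneg (hAinf : Filter.Tendsto (cumHaz α) Filter.atTop Filter.atTop) (z : ℝ) :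
    0 ≤ hitTime α z :=
  le_csInf (hitSet_nonempty hAinf z) (fun s hs => hs.1)

end aux

lemma exp_Ioc_ne_zero {Ω : Type*} [MeasurableSpace Ω] (P : MeasureTheory.Measure Ω)
    (Z : Ω → ℝ) (hZ : Measurable Z)
    (hexp : ∀ t : ℝ, 0 ≤ t → P {ω | t < Z ω} = ENNReal.ofReal (Real.exp (-t)))
    {x y : ℝ} (hx : 0 ≤ x) (hxy : x < y) : P (Z ⁻¹' Set.Ioc x y) ≠ 0 := by
  intro h0
  have hy : 0 ≤ y := hx.trans hxy.le
  have hsplit : {ω | x < Z ω} = Z ⁻¹' Set.Ioc x y ∪ {ω | y < Z ω} := by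
    ext ω
    simp only [Set.mem_setOf_eq, Set.mem_union, Set.mem_preimage, Set.mem_Ioc]
    constructor
    · intro h
      rcases le_or_gt (Z ω) y with h2 | h2
      · exact Or.inl ⟨h, h2⟩
      · exact Or.inr h2
    · rintro (⟨h, _⟩ | h)
      · exact h
      · exact lt_trans hxy h
  have hdisj : Disjoint (Z ⁻¹' Set.Ioc x y) {ω | y < Z ω} := by
    rw [Set.disjoint_left]
    rintro ω ⟨_, h2⟩ h3
    exact absurd h3 (not_lt.mpr h2)
  have hmeas : MeasurableSet {ω | y < Z ω} := hZ measurableSet_Ioi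
  have := measure_union (μ := P) hdisj hmeas
  rw [← hsplit, hexp x hx, hexp y hy, h0, zero_add] at this
  have hexy : Real.exp (-x) = Real.exp (-y) := by
    have h1 : (0:ℝ) ≤ Real.exp (-y) := (Real.exp_pos _).le
    have h2 : (0:ℝ) ≤ Real.exp (-x) := (Real.exp_pos _).le
    exact (ENNReal.ofReal_eq_ofReal_iff h2 h1).mp this
  have := Real.exp_injective hexy
  linarith

/-- Bank index used to place the hitting times of the banks in disjoint (or, for the
new bank, coinciding) windows. -/
def bankIdx (K : ℕ) (k : Fin (K + 2)) : ℕ :=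
  if k.val = 0 then K + 1 else if k.val = K + 1 then 1 else k.val

/-- (Increasing the number of G-SIBs increases the market failure probability.)
With `K+1` banks `τ_1, …, τ_{K+1}` (and fixed intensities `α_0, α_1, …, α_{K+1}`), the probability
of a market failure among the first `K` banks is strictly smaller than the probability of a
market failure among all `K+1` banks. Banks `1, …, K` are indexed by `i : Fin K` via
`i.succ.castSucc : Fin (K+2)` and banks `1, …, K+1` by `i : Fin (K+1)` via `i.succ`. -/
theorem adding_gsib_increases_market_failure_probability
    {Ω : Type*} [MeasurableSpace Ω] (P : Measure Ω) [IsProbabilityMeasure P]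
    (K : ℕ) (hK : 0 < K) (Z : Fin (K + 2) → Ω → ℝ) (α : Fin (K + 2) → ℝ → ℝ)
    (hZmeas : ∀ i, Measurable (Z i))
    (hZindep : iIndepFun Z P)
    (hZexp : ∀ i, ∀ t : ℝ, 0 ≤ t → P {ω | t < Z i ω} = ENNReal.ofReal (Real.exp (-t)))
    (hαpos : ∀ i t, 0 ≤ t → 0 < α i t)
    (hαcont : ∀ i, ContinuousOn (α i) (Set.Ici 0))
    (hAinf : ∀ i, Filter.Tendsto (cumHaz (α i)) Filter.atTop Filter.atTop)
    (ε : ℝ) (hε : 0 < ε) :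
    P {ω | ∃ i j : Fin K, i ≠ j ∧
        |min (hitTime (α 0) (Z 0 ω)) (hitTime (α i.succ.castSucc) (Z i.succ.castSucc ω))
          - min (hitTime (α 0) (Z 0 ω)) (hitTime (α j.succ.castSucc) (Z j.succ.castSucc ω))| < ε}
      < P {ω | ∃ i j : Fin (K + 1), i ≠ j ∧
          |min (hitTime (α 0) (Z 0 ω)) (hitTime (α i.succ) (Z i.succ ω))
            - min (hitTime (α 0) (Z 0 ω)) (hitTime (α j.succ) (Z j.succ ω))| < ε} := by
  classical
  have hεhalf : (0:ℝ) < ε / 2 := by linarith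
  -- windows
  set lo : Fin (K + 2) → ℝ := fun k => 2 * (bankIdx K k : ℝ) * ε with hlo
  have hlo_nonneg : ∀ k, 0 ≤ lo k := by
    intro k; simp only [hlo]; positivity
  have hbIdx_leK : ∀ k : Fin (K + 2), k.val ≠ 0 → bankIdx K k ≤ K := by
    intro k hk
    simp only [bankIdx, if_neg hk]
    split
    · exact hK
    · omega
  -- the favorable event
  set E : Fin (K + 2) → Set Ω := fun k =>
    Z k ⁻¹' Set.Ioc (cumHaz (α k) (lo k)) (cumHaz (α k) (lo k + ε / 2)) with hE
  set C : Set Ω := ⋂ k, E k with hC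
  have hCmeas : MeasurableSet C := MeasurableSet.iInter fun k => (hZmeas k) measurableSet_Ioc
  have hE_ne : ∀ k, P (E k) ≠ 0 := by
    intro k
    exact exp_Ioc_ne_zero P (Z k) (hZmeas k) (hZexp k)
      (cumHaz_nonneg (hαcont k) (hαpos k) (hlo_nonneg k))
      (cumHaz_strictMono (hαcont k) (hαpos k) (hlo_nonneg k)
        (by linarith : lo k < lo k + ε / 2))
  have hC_ne : P C ≠ 0 := by
    rw [hC, hZindep.meas_iInter (fun k => ⟨_, measurableSet_Ioc, rfl⟩)]
    exact Finset.prod_ne_zero_iff.mpr fun k _ => hE_ne k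
  -- bounds on the hitting times on C
  have hηmem : ∀ ω ∈ C, ∀ k, lo k ≤ hitTime (α k) (Z k ω) ∧
      hitTime (α k) (Z k ω) ≤ lo k + ε / 2 := by
    intro ω hω k
    have hk := Set.mem_iInter.mp hω k
    exact ⟨le_hitTime (hαcont k) (hαpos k) (hAinf k) (hlo_nonneg k) hk.1,
      hitTime_le (by linarith [hlo_nonneg k]) hk.2⟩
  -- on C, for banks (index ≠ 0) the default time equals the idiosyncratic hitting time
  have hτ : ∀ ω ∈ C, ∀ k : Fin (K + 2), k.val ≠ 0 →
      min (hitTime (α 0) (Z 0 ω)) (hitTime (α k) (Z k ω)) = hitTime (α k) (Z k ω) := by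
    intro ω hω k hk
    apply min_eq_right
    have h0 := (hηmem ω hω 0).1
    have hkb := (hηmem ω hω k).2
    have hm : (bankIdx K k : ℝ) ≤ K := by exact_mod_cast hbIdx_leK k hk
    have hlo0 : lo 0 = 2 * ((K:ℝ) + 1) * ε := by
      simp only [hlo, bankIdx]
      norm_num
    have hlok : lo k ≤ 2 * (K:ℝ) * ε := by
      simp only [hlo]; nlinarith
    rw [hlo0] at h0
    linarith
  -- on C, banks with distinct bank indices default at least ε apart
  have hsep : ∀ ω ∈ C, ∀ k l : Fin (K + 2), bankIdx K k ≠ bankIdx K l →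
      ε ≤ |hitTime (α k) (Z k ω) - hitTime (α l) (Z l ω)| := by
    intro ω hω k l hne
    obtain ⟨hk1, hk2⟩ := hηmem ω hω k
    obtain ⟨hl1, hl2⟩ := hηmem ω hω l
    simp only [hlo] at hk1 hk2 hl1 hl2
    rcases lt_or_gt_of_ne hne with h | h
    · have hc : (bankIdx K k : ℝ) + 1 ≤ bankIdx K l := by exact_mod_cast h
      rw [abs_sub_comm]
      refine le_trans ?_ (le_abs_self _)
      nlinarith
    · have hc : (bankIdx K l : ℝ) + 1 ≤ bankIdx K k := by exact_mod_cast h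
      refine le_trans ?_ (le_abs_self _)
      nlinarith
  -- measurability of the market failure events
  have hmeasf : ∀ k : Fin (K + 2), Measurable fun ω => hitTime (α k) (Z k ω) :=
    fun k => ((hitTime_mono (hAinf k)).measurable).comp (hZmeas k)
  have hmeasAB : ∀ (n : ℕ) (g : Fin n → Fin (K + 2)), MeasurableSet {ω | ∃ i j : Fin n, i ≠ j ∧
      |min (hitTime (α 0) (Z 0 ω)) (hitTime (α (g i)) (Z (g i) ω))
        - min (hitTime (α 0) (Z 0 ω)) (hitTime (α (g j)) (Z (g j) ω))| < ε} := by
    intro n g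
    have hrw : {ω | ∃ i j : Fin n, i ≠ j ∧
        |min (hitTime (α 0) (Z 0 ω)) (hitTime (α (g i)) (Z (g i) ω))
          - min (hitTime (α 0) (Z 0 ω)) (hitTime (α (g j)) (Z (g j) ω))| < ε}
        = ⋃ i, ⋃ j, {ω | i ≠ j ∧
        |min (hitTime (α 0) (Z 0 ω)) (hitTime (α (g i)) (Z (g i) ω))
          - min (hitTime (α 0) (Z 0 ω)) (hitTime (α (g j)) (Z (g j) ω))| < ε} := by
      ext ω
      simp only [Set.mem_setOf_eq, Set.mem_iUnion]
    rw [hrw]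
    refine MeasurableSet.iUnion fun i => MeasurableSet.iUnion fun j => ?_
    by_cases hij : i = j
    · simp [hij]
    · have hrw2 : {ω | i ≠ j ∧
          |min (hitTime (α 0) (Z 0 ω)) (hitTime (α (g i)) (Z (g i) ω))
            - min (hitTime (α 0) (Z 0 ω)) (hitTime (α (g j)) (Z (g j) ω))| < ε}
          = {ω | |min (hitTime (α 0) (Z 0 ω)) (hitTime (α (g i)) (Z (g i) ω))
            - min (hitTime (α 0) (Z 0 ω)) (hitTime (α (g j)) (Z (g j) ω))| < ε} := by
        ext ω; simp [hij]
      rw [hrw2]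
      have hm : Measurable fun ω =>
          |min (hitTime (α 0) (Z 0 ω)) (hitTime (α (g i)) (Z (g i) ω))
            - min (hitTime (α 0) (Z 0 ω)) (hitTime (α (g j)) (Z (g j) ω))| :=
        (((hmeasf 0).min (hmeasf (g i))).sub ((hmeasf 0).min (hmeasf (g j)))).abs
      exact measurableSet_lt hm measurable_const
  -- the two events
  set SA : Set Ω := {ω | ∃ i j : Fin K, i ≠ j ∧
      |min (hitTime (α 0) (Z 0 ω)) (hitTime (α i.succ.castSucc) (Z i.succ.castSucc ω))
        - min (hitTime (α 0) (Z 0 ω)) (hitTime (α j.succ.castSucc) (Z j.succ.castSucc ω))| < ε}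
    with hSA
  set SB : Set Ω := {ω | ∃ i j : Fin (K + 1), i ≠ j ∧
      |min (hitTime (α 0) (Z 0 ω)) (hitTime (α i.succ) (Z i.succ ω))
        - min (hitTime (α 0) (Z 0 ω)) (hitTime (α j.succ) (Z j.succ ω))| < ε} with hSB
  have hAB : SA ⊆ SB := by
    rintro ω ⟨i, j, hij, h⟩
    refine ⟨i.castSucc, j.castSucc, fun hc => hij (Fin.castSucc_injective _ hc), ?_⟩
    rw [Fin.succ_castSucc i, Fin.succ_castSucc j]
    exact h
  have hCB : C ⊆ SB := by
    intro ω hω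
    refine ⟨Fin.last K, 0, by simp [Fin.ext_iff, hK.ne'], ?_⟩
    have hv1 : ((Fin.last K).succ : Fin (K + 2)).val = K + 1 := by
      simp [Fin.val_succ, Fin.val_last]
    have hv2 : ((0 : Fin (K + 1)).succ : Fin (K + 2)).val = 1 := by simp
    have hne1 : ((Fin.last K).succ : Fin (K + 2)).val ≠ 0 := by omega
    have hne2 : ((0 : Fin (K + 1)).succ : Fin (K + 2)).val ≠ 0 := by omega
    rw [hτ ω hω _ hne1, hτ ω hω _ hne2]
    have hb1 : bankIdx K (Fin.last K).succ = 1 := by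
      unfold bankIdx
      rw [hv1]
      simp
    have hb2 : bankIdx K (0 : Fin (K + 1)).succ = 1 := by
      unfold bankIdx
      rw [hv2, if_neg one_ne_zero, if_neg (by omega : (1:ℕ) ≠ K + 1)]
    obtain ⟨h1, h2⟩ := hηmem ω hω (Fin.last K).succ
    obtain ⟨h3, h4⟩ := hηmem ω hω (0 : Fin (K + 1)).succ
    simp only [hlo, hb1, hb2] at h1 h2 h3 h4
    rw [abs_sub_lt_iff]
    constructor <;> push_cast at * <;> linarith
  have hCA : Disjoint SA C := by
    rw [Set.disjoint_left]
    rintro ω ⟨i, j, hij, habs⟩ hω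
    have hvi : (i.succ.castSucc : Fin (K + 2)).val = i.val + 1 := by simp
    have hvj : (j.succ.castSucc : Fin (K + 2)).val = j.val + 1 := by simp
    have hnei : (i.succ.castSucc : Fin (K + 2)).val ≠ 0 := by omega
    have hnej : (j.succ.castSucc : Fin (K + 2)).val ≠ 0 := by omega
    rw [hτ ω hω _ hnei, hτ ω hω _ hnej] at habs
    have hbi : bankIdx K i.succ.castSucc = i.val + 1 := by
      have := i.isLt
      unfold bankIdx
      rw [hvi, if_neg (by omega : ¬ i.val + 1 = 0), if_neg (by omega : ¬ i.val + 1 = K + 1)]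
    have hbj : bankIdx K j.succ.castSucc = j.val + 1 := by
      have := j.isLt
      unfold bankIdx
      rw [hvj, if_neg (by omega : ¬ j.val + 1 = 0), if_neg (by omega : ¬ j.val + 1 = K + 1)]
    have hbne : bankIdx K i.succ.castSucc ≠ bankIdx K j.succ.castSucc := by
      rw [hbi, hbj]
      have : i.val ≠ j.val := fun hc => hij (Fin.ext hc)
      omega
    exact absurd habs (not_lt.mpr (hsep ω hω _ _ hbne))
  calc P SA < P SA + P C := ENNReal.lt_add_right (measure_ne_top P _) hC_ne
    _ = P (SA ∪ C) := (measure_union hCA hCmeas).symm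
    _ ≤ P SB := measure_mono (Set.union_subset hAB hCB)
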